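/- For p ∈ (0, 1/2), let r(p) = ⌈log₂(1/p)⌉ and define the per-item cost c(p) = (p/ln 2)·r(p) + p + (1-p)·2^{-r(p)} (the per-item cost of a constant tests-per-item first stage with σ = (ln 2)/p items per test and r(p) tests per item, followed by retesting). Let H(p) = -p·log₂(p) - (1-p)·log₂(1-p). Then H(p)/c(p) → ln 2 as p → 0⁺; that is, this scheme achieves rate ln 2 ≈ 0.693 in the sparse limit. -/

import Mathlib

open Filter Real Set Topology

private lemma ctpi_tendsto_L :
    Filter.Tendsto (fun p : ℝ => Real.logb 2 (1/p)) (𝓝[>] 0) atTop := by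
  have h : Tendsto (fun p : ℝ => 1/p) (𝓝[>] (0:ℝ)) atTop := by
    simpa [one_div] using (tendsto_inv_nhdsGT_zero : Tendsto (fun x : ℝ => x⁻¹) (𝓝[>] 0) atTop)
  exact (Real.tendsto_logb_atTop (by norm_num : (1:ℝ) < 2)).comp h

private lemma ctpi_L_ge {p : ℝ} (hp : 0 < p) (hp2 : p < 1/2) :
    1 ≤ Real.logb 2 (1/p) := by
  have h2 : (2:ℝ) ≤ 1/p := by rw [le_div_iff₀ hp]; linarith
  calc (1:ℝ) = Real.logb 2 2 := by simp
    _ ≤ Real.logb 2 (1/p) :=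
        Real.logb_le_logb_of_le (by norm_num) (by norm_num) h2

private lemma ctpi_pow_inv_le {p : ℝ} (hp : 0 < p) :
    ((2:ℝ) ^ ⌈Real.logb 2 (1/p)⌉₊)⁻¹ ≤ p := by
  have h1 : (1/p : ℝ) = (2:ℝ) ^ (Real.logb 2 (1/p)) :=
    (Real.rpow_logb (by norm_num) (by norm_num) (by positivity)).symm
  have h3 : (2:ℝ) ^ (Real.logb 2 (1/p)) ≤ (2:ℝ) ^ ((⌈Real.logb 2 (1/p)⌉₊ : ℝ)) :=
    Real.rpow_le_rpow_of_exponent_le one_le_two (Nat.le_ceil _)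
  rw [Real.rpow_natCast] at h3
  have h2 : p⁻¹ ≤ (2:ℝ) ^ (⌈Real.logb 2 (1/p)⌉₊ : ℕ) := by
    rw [← one_div]; linarith [h1 ▸ h3]
  have hpow : (0:ℝ) < (2:ℝ) ^ (⌈Real.logb 2 (1/p)⌉₊ : ℕ) := by positivity
  rw [inv_le_comm₀ hpow hp]
  exact h2

theorem constant_tests_per_item_rate :
    Filter.Tendsto
      (fun p : ℝ =>
        (-p * Real.logb 2 p - (1 - p) * Real.logb 2 (1 - p)) /
          ((p / Real.log 2) * (⌈Real.logb 2 (1 / p)⌉₊ : ℝ) + p +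
            (1 - p) * ((2 : ℝ) ^ ⌈Real.logb 2 (1 / p)⌉₊)⁻¹))
      (nhdsWithin 0 (Set.Ioi 0)) (nhds (Real.log 2)) := by
  set L : ℝ → ℝ := fun p => Real.logb 2 (1/p) with hLdef
  set N : ℝ → ℝ := fun p => -p * Real.logb 2 p - (1 - p) * Real.logb 2 (1 - p) with hNdef
  set D : ℝ → ℝ := fun p =>
    (p / Real.log 2) * (⌈Real.logb 2 (1 / p)⌉₊ : ℝ) + p +
      (1 - p) * ((2 : ℝ) ^ ⌈Real.logb 2 (1 / p)⌉₊)⁻¹ with hDdef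
  have hmem : ∀ᶠ p in 𝓝[>] (0:ℝ), p ∈ Ioo (0:ℝ) (1/2) :=
    Ioo_mem_nhdsGT_of_mem (by norm_num)
  have hlog2 : (0:ℝ) < Real.log 2 := Real.log_pos (by norm_num)
  have hLinv : Tendsto (fun p : ℝ => (L p)⁻¹) (𝓝[>] 0) (𝓝 0) :=
    ctpi_tendsto_L.inv_tendsto_atTop
  -- ceil over L tends to 1
  have hceil : Tendsto (fun p : ℝ => (⌈L p⌉₊ : ℝ) / L p) (𝓝[>] 0) (𝓝 1) := by
    have hub : Tendsto (fun p : ℝ => 1 + (L p)⁻¹) (𝓝[>] 0) (𝓝 1) := by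
      simpa using (tendsto_const_nhds (x := (1:ℝ))).add hLinv
    refine tendsto_of_tendsto_of_tendsto_of_le_of_le' tendsto_const_nhds hub ?_ ?_
    · filter_upwards [hmem] with p hp
      have hL1 := ctpi_L_ge hp.1 hp.2
      have hLpos : 0 < L p := lt_of_lt_of_le one_pos hL1
      rw [le_div_iff₀ hLpos, one_mul]
      exact Nat.le_ceil _
    · filter_upwards [hmem] with p hp
      have hL1 := ctpi_L_ge hp.1 hp.2
      have hLpos : 0 < L p := lt_of_lt_of_le one_pos hL1
      rw [div_le_iff₀ hLpos]
      have h1 : (⌈L p⌉₊ : ℝ) ≤ L p + 1 := by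
        have := Nat.ceil_lt_add_one (le_of_lt (lt_of_lt_of_le one_pos hL1))
        linarith
      have h2 : (1 + (L p)⁻¹) * L p = L p + 1 := by
        field_simp
      linarith [h2 ▸ h1]
  -- A : N / (p * L) → 1
  have hA : Tendsto (fun p : ℝ => N p / (p * L p)) (𝓝[>] 0) (𝓝 1) := by
    have hub : Tendsto (fun p : ℝ => 1 + (Real.log 2)⁻¹ * (L p)⁻¹) (𝓝[>] 0) (𝓝 1) := by
      have := (tendsto_const_nhds (x := (Real.log 2)⁻¹)).mul hLinv
      simpa using (tendsto_const_nhds (x := (1:ℝ))).add this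
    refine tendsto_of_tendsto_of_tendsto_of_le_of_le' tendsto_const_nhds hub ?_ ?_
    · filter_upwards [hmem] with p hp
      have hL1 := ctpi_L_ge hp.1 hp.2
      have hLpos : 0 < L p := lt_of_lt_of_le one_pos hL1
      have hpL : 0 < p * L p := mul_pos hp.1 hLpos
      rw [le_div_iff₀ hpL, one_mul]
      have h1 : -p * Real.logb 2 p = p * L p := by
        simp only [hLdef, one_div, Real.logb_inv]; ring
      have h1p : (0:ℝ) < 1 - p := by linarith [hp.2]
      have h2 : Real.logb 2 (1 - p) ≤ 0 :=
        Real.logb_nonpos (by norm_num) (by linarith) (by linarith [hp.1])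
      have h3 : 0 ≤ (1 - p) * (-(Real.logb 2 (1 - p))) :=
        mul_nonneg h1p.le (neg_nonneg.mpr h2)
      simp only [hNdef]
      nlinarith [h1]
    · filter_upwards [hmem] with p hp
      have hL1 := ctpi_L_ge hp.1 hp.2
      have hLpos : 0 < L p := lt_of_lt_of_le one_pos hL1
      have hpL : 0 < p * L p := mul_pos hp.1 hLpos
      have h1 : -p * Real.logb 2 p = p * L p := by
        simp only [hLdef, one_div, Real.logb_inv]; ring
      have h1p : (0:ℝ) < 1 - p := by linarith [hp.2]
      have h4 : Real.log ((1-p)⁻¹) ≤ (1-p)⁻¹ - 1 :=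
        Real.log_le_sub_one_of_pos (by positivity)
      have h5 : -Real.log (1-p) ≤ p / (1-p) := by
        rw [Real.log_inv] at h4
        have heq : (1-p)⁻¹ - 1 = p / (1-p) := by field_simp; ring
        linarith [heq ▸ h4]
      have h6' : -(1-p) * Real.log (1-p) ≤ p := by
        have hmul := mul_le_mul_of_nonneg_left h5 h1p.le
        have heq : (1-p) * (p/(1-p)) = p := by field_simp
        nlinarith
      have h6 : -(1-p) * Real.logb 2 (1-p) ≤ p / Real.log 2 := by
        rw [Real.logb, ← mul_div_assoc, div_le_div_iff_of_pos_right hlog2]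
        exact h6'
      rw [div_le_iff₀ hpL]
      have hexp : (1 + (Real.log 2)⁻¹ * (L p)⁻¹) * (p * L p)
          = p * L p + p / Real.log 2 := by
        field_simp
      rw [hexp]
      simp only [hNdef]
      nlinarith [h1, h6]
  -- third term of D over p*L tends to 0
  have hthird : Tendsto (fun p : ℝ => ((1-p) * ((2:ℝ) ^ ⌈Real.logb 2 (1/p)⌉₊)⁻¹) / (p * L p))
      (𝓝[>] 0) (𝓝 0) := by
    refine tendsto_of_tendsto_of_tendsto_of_le_of_le' tendsto_const_nhds hLinv ?_ ?_
    · filter_upwards [hmem] with p hp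
      have hL1 := ctpi_L_ge hp.1 hp.2
      have hLpos : 0 < L p := lt_of_lt_of_le one_pos hL1
      have h1p : (0:ℝ) < 1 - p := by linarith [hp.2]
      have hpow : (0:ℝ) < ((2:ℝ) ^ ⌈Real.logb 2 (1/p)⌉₊)⁻¹ := by positivity
      exact div_nonneg (mul_nonneg h1p.le hpow.le) (mul_pos hp.1 hLpos).le
    · filter_upwards [hmem] with p hp
      have hL1 := ctpi_L_ge hp.1 hp.2
      have hLpos : 0 < L p := lt_of_lt_of_le one_pos hL1
      have hpL : 0 < p * L p := mul_pos hp.1 hLpos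
      have h1p : (0:ℝ) < 1 - p := by linarith [hp.2]
      have hb := ctpi_pow_inv_le hp.1
      have hpow : (0:ℝ) ≤ ((2:ℝ) ^ ⌈Real.logb 2 (1/p)⌉₊)⁻¹ := by positivity
      have hnum : (1-p) * ((2:ℝ) ^ ⌈Real.logb 2 (1/p)⌉₊)⁻¹ ≤ p := by nlinarith
      rw [div_le_iff₀ hpL]
      have heq : (L p)⁻¹ * (p * L p) = p := by field_simp
      linarith [heq ▸ hnum]
  -- D over p*L tends to (log 2)⁻¹
  have hDq : Tendsto (fun p : ℝ => D p / (p * L p)) (𝓝[>] 0) (𝓝 ((Real.log 2)⁻¹)) := by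
    have hsum : Tendsto (fun p : ℝ =>
        (Real.log 2)⁻¹ * ((⌈L p⌉₊ : ℝ) / L p) + (L p)⁻¹ +
          ((1-p) * ((2:ℝ) ^ ⌈Real.logb 2 (1/p)⌉₊)⁻¹) / (p * L p))
        (𝓝[>] 0) (𝓝 ((Real.log 2)⁻¹ * 1 + 0 + 0)) :=
      ((tendsto_const_nhds.mul hceil).add hLinv).add hthird
    rw [mul_one, add_zero, add_zero] at hsum
    refine Tendsto.congr' ?_ hsum
    filter_upwards [hmem] with p hp
    have hL1 := ctpi_L_ge hp.1 hp.2
    have hLpos : 0 < L p := lt_of_lt_of_le one_pos hL1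
    simp only [hDdef]
    have hpL : p * L p ≠ 0 := (mul_pos hp.1 hLpos).ne'
    generalize ((2:ℝ) ^ ⌈Real.logb 2 (1/p)⌉₊)⁻¹ = t
    generalize ((⌈Real.logb 2 (1/p)⌉₊ : ℕ) : ℝ) = c
    have hp0 : p ≠ 0 := hp.1.ne'
    field_simp
  -- p*L over D tends to log 2
  have hB : Tendsto (fun p : ℝ => (p * L p) / D p) (𝓝[>] 0) (𝓝 (Real.log 2)) := by
    have h := hDq.inv₀ (inv_ne_zero hlog2.ne')
    rw [inv_inv] at h
    simpa only [inv_div] using h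
  have hfin := hA.mul hB
  rw [one_mul] at hfin
  refine Tendsto.congr' ?_ hfin
  filter_upwards [hmem] with p hp
  have hL1 := ctpi_L_ge hp.1 hp.2
  have hLpos : 0 < L p := lt_of_lt_of_le one_pos hL1
  have hpL : p * L p ≠ 0 := (mul_pos hp.1 hLpos).ne'
  rw [div_mul_div_comm, mul_comm (p * L p) (D p), mul_div_mul_right _ _ hpL]
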